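/- The right action of GL(W₃) on Q₃ given by q ↦ q ∘ φ has exactly 5 orbits, and the cardinalities of these orbits are 1, 7, 7, 21 and 28 (so in particular Q₃ has exactly 64 elements). -/

import Mathlib

/-- `W₃ = Fin 3 → ZMod 2`. -/
abbrev W3 := Fin 3 → ZMod 2

/-- The determinant trilinear form on `W₃`. -/
def T3 (x y z : W3) : ZMod 2 := Matrix.det (Matrix.of ![x, y, z])

/-- `Q₃`: the set of functions `q : W₃ → ZMod 2` with `q 0 = 0` whose third
polarization is the determinant form `T₃`. -/
def Q3 : Set (W3 → ZMod 2) :=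
  {q | q 0 = 0 ∧ ∀ x y z : W3,
    q (x + y + z) + q (x + y) + q (x + z) + q (y + z) + q x + q y + q z = T3 x y z}

/-- The orbit of `q` under the right action of `GL(W₃)` by precomposition. -/
def orbit3 (q : W3 → ZMod 2) : Set (W3 → ZMod 2) :=
  {q' | ∃ φ : (W3 →ₗ[ZMod 2] W3)ˣ, q' = fun x => q (φ.val x)}

/-! ### Computational encoding -/

abbrev C8 := Fin 8 → ZMod 2

def toIdx (x : W3) : Fin 8 :=
  ⟨(x 0).val * 4 + (x 1).val * 2 + (x 2).val, by
    have h0 := ZMod.val_lt (x 0); have h1 := ZMod.val_lt (x 1)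
    have h2 := ZMod.val_lt (x 2); omega⟩

def fromIdx (i : Fin 8) : W3 :=
  ![![0,0,0],![0,0,1],![0,1,0],![0,1,1],![1,0,0],![1,0,1],![1,1,0],![1,1,1]] i

def enc (v : C8) : W3 → ZMod 2 := fun x => v (toIdx x)

def T3' (x y z : W3) : ZMod 2 :=
    x 0 * (y 1 * z 2 + y 2 * z 1) + x 1 * (y 0 * z 2 + y 2 * z 0) + x 2 * (y 0 * z 1 + y 1 * z 0)

def detF (M : Fin 3 → W3) : ZMod 2 :=
  M 0 0 * (M 1 1 * M 2 2 + M 1 2 * M 2 1) + M 0 1 * (M 1 0 * M 2 2 + M 1 2 * M 2 0) +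
    M 0 2 * (M 1 0 * M 2 1 + M 1 1 * M 2 0)

def mv (M : Fin 3 → W3) (x : W3) : W3 := fun i => M i 0 * x 0 + M i 1 * x 1 + M i 2 * x 2

def act (M : Fin 3 → W3) (v : C8) : C8 := fun i => v (toIdx (mv M (fromIdx i)))

def gl : Finset (Fin 3 → W3) := Finset.univ.filter fun M => detF M = 1

def orbFC (v : C8) : Finset C8 := gl.image (fun M => act M v)

def c1 : C8 := ![0,1,1,1,1,1,1,1]
def c2 : C8 := ![0,0,0,0,0,0,0,1]
def c3 : C8 := ![0,0,0,1,0,1,1,0]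
def c4 : C8 := ![0,0,0,1,1,1,1,1]
def c5 : C8 := ![0,0,0,0,0,1,1,1]

def U : Finset C8 := orbFC c1 ∪ orbFC c2 ∪ orbFC c3 ∪ orbFC c4 ∪ orbFC c5

def inQ (v : C8) : Prop := enc v 0 = 0 ∧ ∀ x y z : W3,
    enc v (x + y + z) + enc v (x + y) + enc v (x + z) + enc v (y + z) + enc v x + enc v y
      + enc v z = T3' x y z

instance (v : C8) : Decidable (inQ v) := by unfold inQ; infer_instance

/-! ### Heavy decidable facts -/

set_option maxRecDepth 1000000 in
set_option maxHeartbeats 8000000 in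
theorem horb : (orbFC c1).card = 1 ∧ (orbFC c2).card = 7 ∧ (orbFC c3).card = 7 ∧
    (orbFC c4).card = 21 ∧ ((orbFC c5).card = 28 ∧ orbFC c2 ≠ orbFC c3) := by decide

set_option maxRecDepth 1000000 in
set_option maxHeartbeats 8000000 in
theorem hU : Finset.univ.filter
      (fun v : C8 => v 0 = 0 ∧ v 7 + v 6 + v 5 + v 3 + v 4 + v 2 + v 1 = 1) = U
    ∧ U.card = 64 := by decide

set_option maxRecDepth 1000000 in
set_option maxHeartbeats 8000000 in
theorem hreps : inQ c1 ∧ inQ c2 ∧ inQ c3 ∧ inQ c4 ∧ inQ c5 := by decide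

/-! ### Small decidable facts -/

theorem htofrom : ∀ i : Fin 8, toIdx (fromIdx i) = i := by decide
theorem hfromto : ∀ x : W3, fromIdx (toIdx x) = x := by decide

/-! ### Bridging lemmas -/

theorem T3_eq (x y z : W3) : T3 x y z = T3' x y z := by
  simp only [T3, T3', Matrix.det_fin_three, Matrix.of_apply]
  simp only [CharTwo.sub_eq_add]
  norm_num [Matrix.cons_val_zero, Matrix.cons_val_one, Matrix.cons_val_two]
  ring

theorem enc_inj : Function.Injective enc := by
  intro v w h
  funext i
  have := congrFun h (fromIdx i)
  simpa [enc, htofrom] using this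

theorem enc_surj (q : W3 → ZMod 2) : enc (fun i => q (fromIdx i)) = q := by
  funext x
  simp [enc, hfromto]

theorem mv_eq_mulVec (M : Fin 3 → W3) (x : W3) : (Matrix.of M).mulVec x = mv M x := by
  funext i
  simp [Matrix.mulVec, dotProduct, Fin.sum_univ_three, mv]

theorem det_of_eq (M : Fin 3 → W3) : (Matrix.of M).det = detF M := by
  simp only [Matrix.det_fin_three, Matrix.of_apply, detF]
  simp only [CharTwo.sub_eq_add]
  ring

theorem isUnit_zmod2 : ∀ d : ZMod 2, IsUnit d ↔ d = 1 := by decide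

/-- Orbit membership in terms of matrices. -/
theorem orbit3_eq (q : W3 → ZMod 2) :
    orbit3 q = {q' | ∃ M : Fin 3 → W3, detF M = 1 ∧ q' = fun x => q (mv M x)} := by
  ext q'
  constructor
  · rintro ⟨φ, rfl⟩
    set M0 : Matrix (Fin 3) (Fin 3) (ZMod 2) := LinearMap.toMatrixAlgEquiv' φ.val with hM0
    have hu : IsUnit M0 := φ.isUnit.map LinearMap.toMatrixAlgEquiv'
    have hdet : detF (fun i j => M0 i j) = 1 := by
      rw [← det_of_eq]
      have : Matrix.of (fun i j => M0 i j) = M0 := rfl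
      rw [this]
      exact (isUnit_zmod2 _).mp (Matrix.isUnit_iff_isUnit_det M0 |>.mp hu)
    refine ⟨fun i j => M0 i j, hdet, funext fun x => ?_⟩
    have h1 : φ.val x = M0.mulVec x := by
      conv_lhs => rw [← Matrix.toLinAlgEquiv'_toMatrixAlgEquiv' (φ.val : W3 →ₗ[ZMod 2] W3)]
      rw [← hM0, Matrix.toLinAlgEquiv'_apply]
    have h2 : (Matrix.of (fun i j => M0 i j)).mulVec x = mv (fun i j => M0 i j) x :=
      mv_eq_mulVec _ x
    rw [h1, ← h2]
    rfl
  · rintro ⟨M, hd, rfl⟩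
    have hu : IsUnit (Matrix.of M) := by
      rw [Matrix.isUnit_iff_isUnit_det, det_of_eq, hd]
      exact isUnit_one
    obtain ⟨u, hu'⟩ := hu.map (Matrix.toLinAlgEquiv' :
      Matrix (Fin 3) (Fin 3) (ZMod 2) ≃ₐ[ZMod 2] (W3 →ₗ[ZMod 2] W3))
    refine ⟨u, funext fun x => ?_⟩
    rw [show (u.val : W3 →ₗ[ZMod 2] W3) x = mv M x by
      rw [hu', Matrix.toLinAlgEquiv'_apply, mv_eq_mulVec]]

theorem orbit3_eq_of_mem {q q' : W3 → ZMod 2} (h : q' ∈ orbit3 q) : orbit3 q' = orbit3 q := by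
  obtain ⟨φ, rfl⟩ := h
  ext q''
  constructor
  · rintro ⟨ψ, rfl⟩
    refine ⟨φ * ψ, funext fun x => ?_⟩
    show q (φ.val (ψ.val x)) = q ((φ * ψ).val x)
    rw [Units.val_mul, Module.End.mul_apply]
  · rintro ⟨ψ, rfl⟩
    refine ⟨φ⁻¹ * ψ, funext fun x => ?_⟩
    show q (ψ.val x) = q (φ.val ((φ⁻¹ * ψ).val x))
    have h : φ.val ((φ⁻¹ * ψ).val x) = ψ.val x := by
      rw [← Module.End.mul_apply, ← Units.val_mul, mul_inv_cancel_left]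
    rw [h]

theorem enc_act (M : Fin 3 → W3) (v : C8) : enc (act M v) = fun x => enc v (mv M x) := by
  funext x
  simp [enc, act, hfromto]

theorem orbit3_enc (v : C8) : orbit3 (enc v) = enc '' ↑(orbFC v) := by
  rw [orbit3_eq]
  ext q'
  simp only [Set.mem_setOf_eq, Set.mem_image, Finset.mem_coe, orbFC, Finset.mem_image, gl,
    Finset.mem_filter, Finset.mem_univ, true_and]
  constructor
  · rintro ⟨M, hd, rfl⟩
    exact ⟨act M v, ⟨M, hd, rfl⟩, (enc_act M v)⟩
  · rintro ⟨w, ⟨M, hd, rfl⟩, rfl⟩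
    exact ⟨M, hd, (enc_act M v)⟩

theorem mv_add (M : Fin 3 → W3) (x y : W3) : mv M (x + y) = mv M x + mv M y := by
  funext i
  simp only [mv, Pi.add_apply]
  ring

theorem mv_zero (M : Fin 3 → W3) : mv M 0 = 0 := by
  funext i
  simp [mv]

theorem T3_mv (M : Fin 3 → W3) (h : detF M = 1) (x y z : W3) :
    T3 (mv M x) (mv M y) (mv M z) = T3 x y z := by
  have key : (Matrix.of ![mv M x, mv M y, mv M z]) = (Matrix.of ![x, y, z]) * (Matrix.of M).transpose := by
    ext i j
    fin_cases i <;>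
      simp [Matrix.mul_apply, Fin.sum_univ_three, mv, mul_comm]
  unfold T3
  rw [key, Matrix.det_mul, Matrix.det_transpose, det_of_eq M, h, mul_one]

theorem mem_Q3_of_inQ {v : C8} (h : inQ v) : enc v ∈ Q3 := by
  refine ⟨h.1, fun x y z => ?_⟩
  rw [T3_eq]
  exact h.2 x y z

theorem Q3_closed {q : W3 → ZMod 2} (hq : q ∈ Q3) (M : Fin 3 → W3) (hd : detF M = 1) :
    (fun x => q (mv M x)) ∈ Q3 := by
  constructor
  · show q (mv M 0) = 0
    rw [mv_zero]; exact hq.1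
  · intro x y z
    show q (mv M (x + y + z)) + q (mv M (x + y)) + q (mv M (x + z)) + q (mv M (y + z))
      + q (mv M x) + q (mv M y) + q (mv M z) = T3 x y z
    simp only [mv_add]
    rw [hq.2 (mv M x) (mv M y) (mv M z)]
    exact T3_mv M hd x y z

/-- `Q3` equals the encoded union of the five orbits. -/
theorem Q3_eq : Q3 = enc '' ↑U := by
  ext q
  constructor
  · intro hq
    refine ⟨fun i => q (fromIdx i), ?_, enc_surj q⟩
    rw [Finset.mem_coe, ← hU.1, Finset.mem_filter]
    refine ⟨Finset.mem_univ _, ?_, ?_⟩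
    · show q (fromIdx 0) = 0
      have h0 : fromIdx 0 = (0 : W3) := by decide
      rw [h0]; exact hq.1
    · have key := hq.2 (fromIdx 4) (fromIdx 2) (fromIdx 1)
      have e7 : fromIdx 4 + fromIdx 2 + fromIdx 1 = fromIdx 7 := by decide
      have e6 : fromIdx 4 + fromIdx 2 = fromIdx 6 := by decide
      have e5 : fromIdx 4 + fromIdx 1 = fromIdx 5 := by decide
      have e3 : fromIdx 2 + fromIdx 1 = fromIdx 3 := by decide
      have eT : T3 (fromIdx 4) (fromIdx 2) (fromIdx 1) = 1 := by
        rw [T3_eq]; decide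
      rw [e7, e6, e5, e3, eT] at key
      exact key
  · rintro ⟨v, hv, rfl⟩
    rw [Finset.mem_coe] at hv
    simp only [U, Finset.mem_union] at hv
    have main : ∀ c : C8, inQ c → v ∈ orbFC c → enc v ∈ Q3 := by
      intro c hc hvc
      simp only [orbFC, Finset.mem_image, gl, Finset.mem_filter, Finset.mem_univ, true_and]
        at hvc
      obtain ⟨M, hd, rfl⟩ := hvc
      rw [enc_act]
      exact Q3_closed (mem_Q3_of_inQ hc) M hd
    rcases hv with (((h | h) | h) | h) | h
    exacts [main c1 hreps.1 h, main c2 hreps.2.1 h, main c3 hreps.2.2.1 h,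
      main c4 hreps.2.2.2.1 h, main c5 hreps.2.2.2.2 h]

theorem ncard_orbit (v : C8) : (orbit3 (enc v)).ncard = (orbFC v).card := by
  rw [orbit3_enc, Set.ncard_image_of_injective _ enc_inj, Set.ncard_coe_finset]

/-! ### Main theorem -/

theorem stmt7 : ∃ q1 q2 q3 q4 q5 : W3 → ZMod 2,
    q1 ∈ Q3 ∧ q2 ∈ Q3 ∧ q3 ∈ Q3 ∧ q4 ∈ Q3 ∧ q5 ∈ Q3 ∧
    {S : Set (W3 → ZMod 2) | ∃ q ∈ Q3, S = orbit3 q} =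
      {orbit3 q1, orbit3 q2, orbit3 q3, orbit3 q4, orbit3 q5} ∧
    ({orbit3 q1, orbit3 q2, orbit3 q3, orbit3 q4, orbit3 q5} :
      Set (Set (W3 → ZMod 2))).ncard = 5 ∧
    (orbit3 q1).ncard = 1 ∧ (orbit3 q2).ncard = 7 ∧ (orbit3 q3).ncard = 7 ∧
    (orbit3 q4).ncard = 21 ∧ (orbit3 q5).ncard = 28 ∧ Q3.ncard = 64 := by
  refine ⟨enc c1, enc c2, enc c3, enc c4, enc c5,
    mem_Q3_of_inQ hreps.1, mem_Q3_of_inQ hreps.2.1, mem_Q3_of_inQ hreps.2.2.1,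
    mem_Q3_of_inQ hreps.2.2.2.1, mem_Q3_of_inQ hreps.2.2.2.2, ?_, ?_, ?_, ?_, ?_, ?_, ?_, ?_⟩
  · -- set of orbits
    ext S
    constructor
    · rintro ⟨q, hq, rfl⟩
      rw [Q3_eq] at hq
      obtain ⟨v, hv, rfl⟩ := hq
      rw [Finset.mem_coe] at hv
      simp only [U, Finset.mem_union] at hv
      simp only [Set.mem_insert_iff, Set.mem_singleton_iff]
      have main : ∀ c : C8, v ∈ orbFC c → orbit3 (enc v) = orbit3 (enc c) := by
        intro c hvc
        apply orbit3_eq_of_mem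
        rw [orbit3_enc]
        exact ⟨v, Finset.mem_coe.mpr hvc, rfl⟩
      rcases hv with (((h | h) | h) | h) | h
      exacts [Or.inl (main c1 h), Or.inr (Or.inl (main c2 h)),
        Or.inr (Or.inr (Or.inl (main c3 h))),
        Or.inr (Or.inr (Or.inr (Or.inl (main c4 h)))),
        Or.inr (Or.inr (Or.inr (Or.inr (main c5 h))))]
    · intro hS
      simp only [Set.mem_insert_iff, Set.mem_singleton_iff] at hS
      rcases hS with h | h | h | h | h
      exacts [⟨enc c1, mem_Q3_of_inQ hreps.1, h⟩, ⟨enc c2, mem_Q3_of_inQ hreps.2.1, h⟩,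
        ⟨enc c3, mem_Q3_of_inQ hreps.2.2.1, h⟩, ⟨enc c4, mem_Q3_of_inQ hreps.2.2.2.1, h⟩,
        ⟨enc c5, mem_Q3_of_inQ hreps.2.2.2.2, h⟩]
  · -- ncard of the five orbits set = 5
    have n1 : (orbit3 (enc c1)).ncard = 1 := by rw [ncard_orbit]; exact horb.1
    have n2 : (orbit3 (enc c2)).ncard = 7 := by rw [ncard_orbit]; exact horb.2.1
    have n3 : (orbit3 (enc c3)).ncard = 7 := by rw [ncard_orbit]; exact horb.2.2.1
    have n4 : (orbit3 (enc c4)).ncard = 21 := by rw [ncard_orbit]; exact horb.2.2.2.1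
    have n5 : (orbit3 (enc c5)).ncard = 28 := by rw [ncard_orbit]; exact horb.2.2.2.2.1
    have ne23 : orbit3 (enc c2) ≠ orbit3 (enc c3) := by
      rw [orbit3_enc, orbit3_enc]
      intro h
      exact horb.2.2.2.2.2 (Finset.coe_injective ((Set.image_injective.mpr enc_inj) h))
    have nediff : ∀ A B : Set (W3 → ZMod 2), A.ncard ≠ B.ncard → A ≠ B := by
      intro A B h hAB; exact h (by rw [hAB])
    have h1 : orbit3 (enc c1) ∉ ({orbit3 (enc c2), orbit3 (enc c3), orbit3 (enc c4),
        orbit3 (enc c5)} : Set _) := by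
      simp only [Set.mem_insert_iff, Set.mem_singleton_iff]
      push_neg
      exact ⟨nediff _ _ (by rw [n1, n2]; omega), nediff _ _ (by rw [n1, n3]; omega),
        nediff _ _ (by rw [n1, n4]; omega), nediff _ _ (by rw [n1, n5]; omega)⟩
    have h2 : orbit3 (enc c2) ∉ ({orbit3 (enc c3), orbit3 (enc c4),
        orbit3 (enc c5)} : Set _) := by
      simp only [Set.mem_insert_iff, Set.mem_singleton_iff]
      push_neg
      exact ⟨ne23, nediff _ _ (by rw [n2, n4]; omega), nediff _ _ (by rw [n2, n5]; omega)⟩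
    have h3 : orbit3 (enc c3) ∉ ({orbit3 (enc c4), orbit3 (enc c5)} : Set _) := by
      simp only [Set.mem_insert_iff, Set.mem_singleton_iff]
      push_neg
      exact ⟨nediff _ _ (by rw [n3, n4]; omega), nediff _ _ (by rw [n3, n5]; omega)⟩
    have h4 : orbit3 (enc c4) ∉ ({orbit3 (enc c5)} : Set _) := by
      simp only [Set.mem_singleton_iff]
      exact nediff _ _ (by rw [n4, n5]; omega)
    rw [Set.ncard_insert_of_notMem h1
        ((((Set.finite_singleton _).insert _).insert _).insert _),
      Set.ncard_insert_of_notMem h2 (((Set.finite_singleton _).insert _).insert _),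
      Set.ncard_insert_of_notMem h3 ((Set.finite_singleton _).insert _),
      Set.ncard_insert_of_notMem h4 (Set.finite_singleton _),
      Set.ncard_singleton]
  · rw [ncard_orbit]; exact horb.1
  · rw [ncard_orbit]; exact horb.2.1
  · rw [ncard_orbit]; exact horb.2.2.1
  · rw [ncard_orbit]; exact horb.2.2.2.1
  · rw [ncard_orbit]; exact horb.2.2.2.2.1
  · rw [Q3_eq, Set.ncard_image_of_injective _ enc_inj, Set.ncard_coe_finset]
    exact hU.2
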